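/- arXiv:2409.06658 — 2 statements merged into one kernel-verified Lean document; each statement's English description precedes it below -/
import Mathlib

section
/- Let r ≥ 1, n ≥ 0 and 0 ≤ l ≤ r−1 be integers, let P ∈ ℂ[z₁,…,z_r] be a symmetric polynomial of degree at most n in each variable, and let Q₀,…,Q_n ∈ ℂ[z₁,…,z_r] be symmetric polynomials of degree exactly 1 in each variable, written Q_k = ∑_{m=0}^{r} A_{k,m} e_m. For y = (y₁,…,y_l) ∈ ℂ^l set Q̂_k(y) = ∑_{m=0}^{l} A_{k,m+r−l} e_m(y₁,…,y_l), and assume Q̂_k(y) ≠ 0 for all k. Let x ∈ ℂ^r and, for each k ∈ {0,…,n}, let t_k ∈ ℂ^r satisfy e_m(t_k) = e_m(x) − (Q_k(x)/Q̂_k(y))·e_{m+l−r}(y₁,…,y_l) for all m ∈ {1,…,r}, where e_j := 0 for j < 0. Assume Q_j(x) ≠ 0 for all j and Q_j(t_k) ≠ 0 for all j ≠ k. Then P(x)/∏_{j=0}^{n} Q_j(x) = ∑_{k=0}^{n} [ P(t_k)/∏_{j=0, j≠k}^{n} Q_j(t_k) ] · 1/Q_k(x). -/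
open MvPolynomial Finset

private lemma lex_le_coord {r : ℕ} (hr : 0 < r) {a b : Fin r →₀ ℕ}
    (h : (toLex a : Lex (Fin r →₀ ℕ)) ≤ toLex b) : a ⟨0, hr⟩ ≤ b ⟨0, hr⟩ := by
  rcases h.lt_or_eq with h | h
  · have h' : Finsupp.Lex (· < ·) (· < ·) a b := h
    obtain ⟨j, hj, hlt⟩ := Finsupp.lex_def.mp h'
    rcases eq_or_ne (⟨0, hr⟩ : Fin r) j with rfl | hne
    · exact hlt.le
    · have hlt0 : (⟨0, hr⟩ : Fin r) < j :=
        lt_of_le_of_ne (by simp [Fin.le_def]) hne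
      exact (hj _ hlt0).le
  · exact le_of_eq (DFunLike.congr_fun (toLex.injective h) _)

private lemma natDegree_aeval_le {r : ℕ} (F : MvPolynomial (Fin r) ℂ)
    (g : Fin r → Polynomial ℂ) (hg : ∀ i, (g i).natDegree ≤ 1) :
    (aeval g F).natDegree ≤ F.totalDegree := by
  rw [aeval_def, eval₂_eq]
  apply Polynomial.natDegree_sum_le_of_forall_le
  intro d hd
  refine Polynomial.natDegree_mul_le.trans ?_
  have h1 : (algebraMap ℂ (Polynomial ℂ) (F.coeff d)).natDegree = 0 := by
    rw [Polynomial.algebraMap_eq]; exact Polynomial.natDegree_C _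
  rw [h1, zero_add]
  refine (Polynomial.natDegree_prod_le _ _).trans ?_
  refine le_trans ?_ (le_totalDegree hd)
  have : (d.sum fun _ e => e) = ∑ i ∈ d.support, d i := rfl
  rw [this]
  refine Finset.sum_le_sum fun i _ => ?_
  refine Polynomial.natDegree_pow_le.trans ?_
  calc d i * (g i).natDegree ≤ d i * 1 := Nat.mul_le_mul_left _ (hg i)
    _ = d i := mul_one _

private lemma totalDegree_le_of_degreeOf {r : ℕ} (hr : 0 < r) (n : ℕ)
    (F : MvPolynomial (Fin r) ℂ)
    (h : (aeval (fun i : Fin r => esymm (Fin r) ℂ ((i : ℕ) + 1)) F).degreeOf ⟨0, hr⟩ ≤ n) :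
    F.totalDegree ≤ n := by
  classical
  rcases eq_or_ne F 0 with rfl | hF
  · simp
  have hsupp : F.support.Nonempty := MvPolynomial.support_nonempty.mpr hF
  set f : (Fin r →₀ ℕ) → MvPolynomial (Fin r) ℂ :=
    fun u => esymmAlgHomMonomial (Fin r) u (F.coeff u) with hf
  have hPsum : aeval (fun i : Fin r => esymm (Fin r) ℂ ((i : ℕ) + 1)) F
      = ∑ u ∈ F.support, f u := by
    conv_lhs => rw [F.as_sum]
    rw [map_sum]
    refine Finset.sum_congr rfl fun u _ => ?_
    rw [hf]; dsimp only
    rw [esymmAlgHomMonomial, esymmAlgHom_apply]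
  have hfne : ∀ u ∈ F.support, f u ≠ 0 := by
    intro u hu
    rw [hf]; dsimp only
    rw [Ne, ← AddMonoidAlgebra.leadingCoeff_eq_zero toLex.injective,
      leadingCoeff_esymmAlgHomMonomial u le_rfl]
    exact mem_support_iff.mp hu
  obtain ⟨t₀, ht₀, hmax⟩ := Finset.exists_mem_eq_sup F.support hsupp
    (fun u => (f u).supDegree toLex)
  have hlt : ∀ u ∈ F.support, u ≠ t₀ →
      (f u).supDegree toLex < (f t₀).supDegree toLex := by
    intro u hu hne'
    refine lt_of_le_of_ne (le_trans (Finset.le_sup (f := fun u => (f u).supDegree toLex) hu) (le_of_eq hmax)) fun he => hne' ?_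
    have h1 := supDegree_esymmAlgHomMonomial (mem_support_iff.mp hu) u (le_refl r)
    have h2 := supDegree_esymmAlgHomMonomial (mem_support_iff.mp ht₀) t₀ (le_refl r)
    have hacc : Fin.accumulate r r ⇑u = Fin.accumulate r r ⇑t₀ := by
      rw [← h1, ← h2, he]
    exact DFunLike.coe_injective (Fin.accumulate_injective le_rfl hacc)
  obtain ⟨hdeg_eq, hlc⟩ :=
    AddMonoidAlgebra.supDegree_leadingCoeff_sum_eq (D := toLex) ht₀ hlt
  have hPne : (∑ u ∈ F.support, f u) ≠ 0 := by
    rw [Ne, ← AddMonoidAlgebra.leadingCoeff_eq_zero toLex.injective, hlc]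
    rw [hf]; dsimp only
    rw [leadingCoeff_esymmAlgHomMonomial t₀ le_rfl]
    exact mem_support_iff.mp ht₀
  obtain ⟨a, ha, hae⟩ := AddMonoidAlgebra.exists_supDegree_mem_support toLex hPne
  rw [hPsum] at h
  have h0a : a ⟨0, hr⟩ ≤ n := by
    refine le_trans ?_ h
    rw [degreeOf_eq_sup]
    exact Finset.le_sup (f := fun s => s ⟨0, hr⟩) ha
  rw [totalDegree]
  refine Finset.sup_le fun u hu => ?_
  -- supDegree (f u) ≤ toLex a
  have hle : (f u).supDegree toLex ≤ toLex a := by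
    rw [← hae, hdeg_eq]
    exact le_trans (Finset.le_sup (f := fun u => (f u).supDegree toLex) hu) (le_of_eq hmax)
  have h1 := supDegree_esymmAlgHomMonomial (mem_support_iff.mp hu) u (le_refl r)
  set w : Fin r →₀ ℕ := ofLex ((f u).supDegree toLex) with hw
  have hlew : (toLex w : Lex (Fin r →₀ ℕ)) ≤ toLex a := by
    rw [hw, toLex_ofLex]; exact hle
  have hcoord := lex_le_coord hr hlew
  have hwacc : w ⟨0, hr⟩ = ∑ i : Fin r, u i := by
    have : ⇑w = Fin.accumulate r r ⇑u := h1
    rw [show w ⟨0, hr⟩ = (⇑w) ⟨0, hr⟩ from rfl, this, Fin.accumulate_apply]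
    apply Finset.sum_congr
    · apply Finset.filter_true_of_mem
      intro i _; exact Nat.zero_le _
    · intros; rfl
  have husum : (u.sum fun _ e => e) = ∑ i : Fin r, u i :=
    Finsupp.sum_fintype _ _ fun _ => rfl
  rw [husum, ← hwacc]
  exact le_trans hcoord h0a


private lemma partial_fraction_core (n : ℕ) (f : Polynomial ℂ) (hf : f.natDegree ≤ n)
    (s b : Fin (n + 1) → ℂ) (hb : ∀ j, b j ≠ 0) (hs0 : ∀ j, s j ≠ 0)
    (hinj : Function.Injective s) :
    f.eval 0 / ∏ j, (b j * s j)
      = ∑ k, (f.eval (s k) / ∏ j ∈ Finset.univ.erase k, (b j * (s j - s k)))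
          * (1 / (b k * s k)) := by
  classical
  have hdeg : f.degree < (#(univ : Finset (Fin (n + 1))) : ℕ) := by
    rw [card_univ, Fintype.card_fin]
    refine lt_of_le_of_lt Polynomial.degree_le_natDegree ?_
    exact_mod_cast Nat.lt_succ_of_le hf
  have h0 := Lagrange.eq_interpolate (v := s) (Set.injOn_of_injective hinj) hdeg
  have he : f.eval 0 = ∑ k, f.eval (s k)
      * ∏ j ∈ univ.erase k, ((s k - s j)⁻¹ * (0 - s j)) := by
    conv_lhs => rw [h0]
    rw [Lagrange.interpolate_apply, Polynomial.eval_finset_sum]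
    refine Finset.sum_congr rfl fun k _ => ?_
    rw [Polynomial.eval_mul, Polynomial.eval_C, Lagrange.basis, Polynomial.eval_prod]
    congr 1
    refine Finset.prod_congr rfl fun j _ => ?_
    rw [Lagrange.basisDivisor, Polynomial.eval_mul, Polynomial.eval_C,
      Polynomial.eval_sub, Polynomial.eval_X, Polynomial.eval_C]
  rw [he, Finset.sum_div]
  refine Finset.sum_congr rfl fun k _ => ?_
  have hprod : ∏ j, (b j * s j) = (∏ j ∈ univ.erase k, (b j * s j)) * (b k * s k) :=
    (Finset.prod_erase_mul _ _ (mem_univ k)).symm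
  have key : ∀ j ∈ univ.erase k,
      (s k - s j)⁻¹ * (0 - s j) * (b j * s j)⁻¹ = (b j * (s j - s k))⁻¹ := by
    intro j hj
    have hjk : s j ≠ s k := fun hh => (mem_erase.mp hj).1 (hinj hh)
    have h1 : s k - s j ≠ 0 := sub_ne_zero.mpr (Ne.symm hjk)
    have h2 : s j - s k ≠ 0 := sub_ne_zero.mpr hjk
    have e1 : (s k - s j)⁻¹ * (0 - s j) * (b j * s j)⁻¹
        = (0 - s j) / ((s k - s j) * (b j * s j)) := by
      rw [div_eq_mul_inv, mul_inv (s k - s j) (b j * s j)]; ring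
    have e2 : (b j * (s j - s k))⁻¹ = 1 / (b j * (s j - s k)) := (one_div _).symm
    rw [e1, e2, div_eq_div_iff (mul_ne_zero h1 (mul_ne_zero (hb j) (hs0 j)))
      (mul_ne_zero (hb j) h2)]
    ring
  have hfac : (∏ j ∈ univ.erase k, ((s k - s j)⁻¹ * (0 - s j)))
      * (∏ j ∈ univ.erase k, (b j * s j))⁻¹
      = (∏ j ∈ univ.erase k, (b j * (s j - s k)))⁻¹ := by
    rw [← Finset.prod_inv_distrib, ← Finset.prod_mul_distrib, ← Finset.prod_inv_distrib]
    exact Finset.prod_congr rfl key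
  rw [hprod, div_eq_mul_inv, div_eq_mul_inv, one_div, mul_inv, ← mul_assoc,
    mul_assoc (f.eval (s k)), hfac]


/-- Corollary 2.2: degenerate partial fraction expansion for symmetric
rational functions, with `l` of the `y`-variables kept finite. -/
theorem symmetric_partial_fraction_degenerate
    (r n l : ℕ) (hr : 1 ≤ r) (hl : l < r)
    (P : MvPolynomial (Fin r) ℂ) (hPsym : P.IsSymmetric)
    (hPdeg : ∀ i : Fin r, P.degreeOf i ≤ n)
    (Q : Fin (n + 1) → MvPolynomial (Fin r) ℂ)
    (hQsym : ∀ k, (Q k).IsSymmetric)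
    (hQdeg : ∀ k (i : Fin r), (Q k).degreeOf i = 1)
    (A : Fin (n + 1) → ℕ → ℂ)
    (hQA : ∀ k, Q k = ∑ m ∈ Finset.range (r + 1),
      MvPolynomial.C (A k m) * esymm (Fin r) ℂ m)
    (y : Fin l → ℂ)
    (hQhat : ∀ k, (∑ m ∈ Finset.range (l + 1),
      A k (m + r - l) * eval y (esymm (Fin l) ℂ m)) ≠ 0)
    (x : Fin r → ℂ)
    (t : Fin (n + 1) → Fin r → ℂ)
    (ht : ∀ k, ∀ m ∈ Finset.Icc 1 r,
      eval (t k) (esymm (Fin r) ℂ m) =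
        eval x (esymm (Fin r) ℂ m)
          - (eval x (Q k) / (∑ m' ∈ Finset.range (l + 1),
              A k (m' + r - l) * eval y (esymm (Fin l) ℂ m')))
            * (if r ≤ m + l then eval y (esymm (Fin l) ℂ (m + l - r)) else 0))
    (hQx : ∀ j, eval x (Q j) ≠ 0)
    (hQt : ∀ j k, j ≠ k → eval (t k) (Q j) ≠ 0) :
    eval x P / ∏ j, eval x (Q j)
      = ∑ k, (eval (t k) P / ∏ j ∈ Finset.univ.erase k, eval (t k) (Q j))
          * (1 / eval x (Q k)) := by
  classical
  obtain ⟨Eh, hEh⟩ : ∃ E : Fin (n + 1) → ℂ, E = fun j => ∑ m ∈ Finset.range (l + 1),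
      A j (m + r - l) * eval y (esymm (Fin l) ℂ m) := ⟨_, rfl⟩
  obtain ⟨v, hv⟩ : ∃ v : ℕ → ℂ, v = fun m =>
      if r ≤ m + l then eval y (esymm (Fin l) ℂ (m + l - r)) else 0 := ⟨_, rfl⟩
  obtain ⟨s, hsdef⟩ : ∃ s : Fin (n + 1) → ℂ, s = fun j => eval x (Q j) / Eh j := ⟨_, rfl⟩
  have hEh0 : ∀ j, Eh j ≠ 0 := by intro j; rw [hEh]; exact hQhat j
  have hs0 : ∀ j, s j ≠ 0 := fun j => by
    rw [hsdef]; exact div_ne_zero (hQx j) (hEh0 j)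
  have hsx : ∀ j, eval x (Q j) = Eh j * s j := by
    intro j
    simp only [hsdef]
    rw [mul_comm]
    exact (div_mul_cancel₀ _ (hEh0 j)).symm
  have hQxe : ∀ j, eval x (Q j) = ∑ m ∈ Finset.range (r + 1),
      A j m * eval x (esymm (Fin r) ℂ m) := by
    intro j
    rw [hQA j]
    simp [eval_sum]
  have hAv : ∀ j, ∑ m ∈ Finset.range (r + 1), A j m * v m = Eh j := by
    intro j
    have h1 : ∀ m ∈ Finset.range (r - l), A j m * v m = 0 := by
      intro m hm
      rw [Finset.mem_range] at hm
      simp only [hv]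
      rw [if_neg (by omega), mul_zero]
    calc ∑ m ∈ Finset.range (r + 1), A j m * v m
        = ∑ m ∈ Finset.Ico (r - l) (r + 1), A j m * v m := by
          rw [Finset.range_eq_Ico,
            ← Finset.sum_Ico_consecutive _ (Nat.zero_le (r - l)) (by omega : r - l ≤ r + 1),
            ← Finset.range_eq_Ico, Finset.sum_eq_zero h1, zero_add]
      _ = ∑ m ∈ Finset.range (l + 1), A j (r - l + m) * v (r - l + m) := by
          rw [Finset.sum_Ico_eq_sum_range, show r + 1 - (r - l) = l + 1 from by omega]
      _ = Eh j := by
          rw [hEh]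
          refine Finset.sum_congr rfl fun m hm => ?_
          simp only [hv]
          rw [if_pos (show r ≤ r - l + m + l by omega),
            show r - l + m + l - r = m from by omega,
            show r - l + m = m + r - l from by omega]
  have hem : ∀ k, ∀ m ∈ Finset.range (r + 1),
      eval (t k) (esymm (Fin r) ℂ m) = eval x (esymm (Fin r) ℂ m) - s k * v m := by
    intro k m hm
    rcases Nat.eq_zero_or_pos m with rfl | hm1
    · simp only [hv]
      rw [if_neg (by omega), mul_zero, sub_zero]
      simp
    · rw [Finset.mem_range] at hm
      have h2 := ht k m (Finset.mem_Icc.mpr ⟨hm1, by omega⟩)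
      rw [h2]
      simp only [hsdef, hv, hEh]
  have hQte : ∀ j k, eval (t k) (Q j) = Eh j * (s j - s k) := by
    intro j k
    have e1 : eval (t k) (Q j) = ∑ m ∈ Finset.range (r + 1),
        A j m * eval (t k) (esymm (Fin r) ℂ m) := by
      rw [hQA j]
      simp [eval_sum]
    rw [e1, Finset.sum_congr rfl fun m hm => by rw [hem k m hm]]
    have e2 : ∑ m ∈ Finset.range (r + 1),
        A j m * (eval x (esymm (Fin r) ℂ m) - s k * v m)
        = (∑ m ∈ Finset.range (r + 1), A j m * eval x (esymm (Fin r) ℂ m))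
          - s k * ∑ m ∈ Finset.range (r + 1), A j m * v m := by
      rw [Finset.mul_sum, ← Finset.sum_sub_distrib]
      exact Finset.sum_congr rfl fun m _ => by ring
    rw [e2, hAv j, ← hQxe j, hsx j]
    ring
  have hsinj : Function.Injective s := by
    intro j k hjk
    by_contra hne
    exact hQt j k hne (by rw [hQte j k, hjk, sub_self, mul_zero])
  obtain ⟨F, hF⟩ := (esymmAlgHom_fin_bijective ℂ r).2 ⟨P, hPsym⟩
  have hFP : aeval (fun i : Fin r => esymm (Fin r) ℂ ((i : ℕ) + 1)) F = P := by
    have := congrArg Subtype.val hF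
    rwa [esymmAlgHom_apply] at this
  have hFdeg : F.totalDegree ≤ n := by
    refine totalDegree_le_of_degreeOf hr n F ?_
    rw [hFP]; exact hPdeg _
  set g : Fin r → Polynomial ℂ := fun i =>
      Polynomial.C (eval x (esymm (Fin r) ℂ ((i : ℕ) + 1)))
        - Polynomial.X * Polynomial.C (v ((i : ℕ) + 1)) with hg
  have hgdeg : ∀ i, (g i).natDegree ≤ 1 := by
    intro i
    simp only [hg]
    refine (Polynomial.natDegree_sub_le _ _).trans (max_le ?_ ?_)
    · simp
    · refine Polynomial.natDegree_mul_le.trans ?_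
      simp
  have hcoe : ∀ (p : MvPolynomial (Fin r) ℂ) (z : Fin r → ℂ),
      eval z p = MvPolynomial.aeval z p := by
    intro p z
    rw [← MvPolynomial.coe_aeval_eq_eval]
    rfl
  have hfdeg : (aeval g F).natDegree ≤ n :=
    le_trans (natDegree_aeval_le F g hgdeg) hFdeg
  have hfeval : ∀ c : ℂ, (aeval g F).eval c
      = aeval (fun i : Fin r =>
          eval x (esymm (Fin r) ℂ ((i : ℕ) + 1)) - c * v ((i : ℕ) + 1)) F := by
    intro c
    have h1 : (aeval g F).eval c = Polynomial.aeval c (aeval g F) :=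
      (congrFun (Polynomial.coe_aeval_eq_eval c) _).symm
    rw [h1, comp_aeval_apply]
    have hfun : (fun i : Fin r => Polynomial.aeval c (g i))
        = fun i : Fin r =>
          eval x (esymm (Fin r) ℂ ((i : ℕ) + 1)) - c * v ((i : ℕ) + 1) := by
      funext i
      simp only [hg]
      simp only [map_sub, map_mul, Polynomial.aeval_C, Polynomial.aeval_X,
        Algebra.algebraMap_self_apply]
    rw [hfun]
  have hPx : eval x P = (aeval g F).eval 0 := by
    rw [← hFP, hcoe, comp_aeval_apply, hfeval 0]
    have hfun : (fun i : Fin r => MvPolynomial.aeval x (esymm (Fin r) ℂ ((i : ℕ) + 1)))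
        = fun i : Fin r =>
          eval x (esymm (Fin r) ℂ ((i : ℕ) + 1)) - 0 * v ((i : ℕ) + 1) := by
      funext i
      rw [zero_mul, sub_zero, hcoe]
    rw [hfun]
  have hPt : ∀ k, eval (t k) P = (aeval g F).eval (s k) := by
    intro k
    rw [← hFP, hcoe, comp_aeval_apply, hfeval (s k)]
    have hfun : (fun i : Fin r => MvPolynomial.aeval (t k) (esymm (Fin r) ℂ ((i : ℕ) + 1)))
        = fun i : Fin r =>
          eval x (esymm (Fin r) ℂ ((i : ℕ) + 1)) - s k * v ((i : ℕ) + 1) := by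
      funext i
      rw [← hcoe]
      exact hem k ((i : ℕ) + 1) (Finset.mem_range.mpr (by omega))
    rw [hfun]
  have h1 : ∏ j, eval x (Q j) = ∏ j, (Eh j * s j) :=
    Finset.prod_congr rfl fun j _ => hsx j
  have h2 : ∀ k, ∏ j ∈ Finset.univ.erase k, eval (t k) (Q j)
      = ∏ j ∈ Finset.univ.erase k, (Eh j * (s j - s k)) := fun k =>
    Finset.prod_congr rfl fun j _ => hQte j k
  calc eval x P / ∏ j, eval x (Q j)
      = (aeval g F).eval 0 / ∏ j, (Eh j * s j) := by rw [hPx, h1]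
    _ = ∑ k, ((aeval g F).eval (s k)
          / ∏ j ∈ Finset.univ.erase k, (Eh j * (s j - s k)))
          * (1 / (Eh k * s k)) :=
        partial_fraction_core n (aeval g F) hfdeg s Eh hEh0 hs0 hsinj
    _ = _ := by
        refine Finset.sum_congr rfl fun k _ => ?_
        rw [hPt k, h2 k, hsx k]
end

section
/- Let n ≥ 0 be an integer and let u, λ, x₁, x₂, x₃ ∈ ℂ. For each k ∈ {0,…,n} let η_k^+, η_k^− ∈ ℂ be any numbers satisfying η_k^+ + η_k^− = x₁ + x₂ + x₃ + k and (−k − λ)(η_k^+ − λ)(η_k^− − λ) = (x₁−λ)(x₂−λ)(x₃−λ). Assume x_j + k ≠ 0 (j = 1,2,3), λ + k ≠ 0, and η_k^+ + j ≠ 0, η_k^− + j ≠ 0 for all k ∈ {0,…,n} and j ∈ {0,…,n}. Then (u−x₁)_n (u−x₂)_n (u−x₃)_n / ( (x₁)_{n+1} (x₂)_{n+1} (x₃)_{n+1} ) = ∑_{k=0}^{n} [ (−1)^k / (k!(n−k)!) ] · [ (u+k)_n (u−η_k^+)_n (u−η_k^−)_n / ( (η_k^+)_{n+1} (η_k^−)_{n+1}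 ) ] · ( 1/(x₁+k) + 1/(x₂+k) + 1/(x₃+k) − 1/(λ+k) ). -/
open Finset

/-- The Pochhammer symbol `(z)_k = z(z+1)⋯(z+k-1)`, with `(z)_0 = 1`. -/
noncomputable def poch (z : ℂ) (k : ℕ) : ℂ := ∏ j ∈ Finset.range k, (z + j)

section Aux
open Polynomial

lemma residue_sum {ι : Type*} [DecidableEq ι] (s : Finset ι) (v : ι → ℂ)
    (hvs : Set.InjOn v s) (N : Polynomial ℂ) (hN : N.degree < ((#s - 1 : ℕ) : WithBot ℕ)) :
    ∑ i ∈ s, N.eval (v i) / ∏ j ∈ s.erase i, (v i - v j) = 0 := by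
  have hd : N.degree < (#s : ℕ) := hN.trans_le (by exact_mod_cast Nat.sub_le _ _)
  have h := Lagrange.eq_interpolate hvs hd
  have hc := congrArg (fun p => Polynomial.coeff p (#s - 1)) h
  simp only [Lagrange.interpolate_apply, Polynomial.finset_sum_coeff,
    Polynomial.coeff_C_mul] at hc
  have h0 : N.coeff (#s - 1) = 0 := Polynomial.coeff_eq_zero_of_degree_lt hN
  rw [h0] at hc
  have hb : ∀ i ∈ s, (Lagrange.basis s v i).coeff (#s - 1)
      = (∏ j ∈ s.erase i, (v i - v j))⁻¹ := by
    intro i hi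
    rw [← Lagrange.natDegree_basis hvs hi, Polynomial.coeff_natDegree, Lagrange.basis,
      Polynomial.leadingCoeff_prod, ← Finset.prod_inv_distrib]
    refine Finset.prod_congr rfl fun j hj => ?_
    rw [Lagrange.basisDivisor, Polynomial.leadingCoeff_mul, Polynomial.leadingCoeff_C,
      (Polynomial.monic_X_sub_C (v j)).leadingCoeff, mul_one]
  rw [Finset.sum_congr rfl (fun i hi => by rw [hb i hi])] at hc
  simpa [div_eq_mul_inv] using hc.symm

lemma cubic_all (kk lam x₁ x₂ x₃ p m t : ℂ)
    (h1 : p + m = x₁ + x₂ + x₃ + kk)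
    (h2 : (-kk - lam) * (p - lam) * (m - lam) = (x₁ - lam) * (x₂ - lam) * (x₃ - lam)) :
    (t - p) * (t - m) * (t + kk) * (lam + kk)
      = (t - x₁) * (t - x₂) * (t - x₃) * (lam + kk)
        - (x₁ + kk) * (x₂ + kk) * (x₃ + kk) * (t - lam) := by
  linear_combination ((t + kk) * (lam + kk) * (lam - t)) * h1 + (-(t + kk)) * h2

lemma cubic_deriv (kk lam x₁ x₂ x₃ p m : ℂ)
    (h1 : p + m = x₁ + x₂ + x₃ + kk)
    (h2 : (-kk - lam) * (p - lam) * (m - lam) = (x₁ - lam) * (x₂ - lam) * (x₃ - lam)) :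
    (p + kk) * (m + kk) * (lam + kk)
      = ((x₂ + kk) * (x₃ + kk) + (x₁ + kk) * (x₃ + kk) + (x₁ + kk) * (x₂ + kk)) * (lam + kk)
        - (x₁ + kk) * (x₂ + kk) * (x₃ + kk) := by
  linear_combination ((lam + kk) ^ 2) * h1 + (-1 : ℂ) * h2

lemma prod_range_cast_add_one (r : ℕ) :
    ∏ i ∈ range r, ((i : ℂ) + 1) = (r.factorial : ℂ) := by
  rw [← Finset.prod_range_add_one_eq_factorial r]
  push_cast
  rfl

lemma erase_range_split (n k : ℕ) (hk : k ≤ n) :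
    (range (n + 1)).erase k = range k ∪ Ico (k + 1) (n + 1) := by
  ext x
  simp only [mem_erase, mem_range, mem_union, mem_Ico]
  omega

lemma prod_erase_sub (n k : ℕ) (hk : k ≤ n) :
    ∏ j ∈ (range (n + 1)).erase k, ((j : ℂ) - (k : ℂ))
      = (-1 : ℂ) ^ k * (k.factorial : ℂ) * ((n - k).factorial : ℂ) := by
  rw [erase_range_split n k hk, Finset.prod_union (by
    simp only [Finset.disjoint_left, mem_range, mem_Ico]; omega)]
  have h1 : ∏ j ∈ range k, ((j : ℂ) - (k : ℂ)) = (-1 : ℂ) ^ k * (k.factorial : ℂ) := by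
    calc ∏ j ∈ range k, ((j : ℂ) - (k : ℂ)) = ∏ j ∈ range k, (-1 : ℂ) * ((k : ℂ) - (j : ℂ)) := by
          refine Finset.prod_congr rfl fun j hj => by ring
      _ = (-1 : ℂ) ^ k * ∏ j ∈ range k, ((k : ℂ) - (j : ℂ)) := by
          rw [Finset.prod_mul_distrib, Finset.prod_const, card_range]
      _ = (-1 : ℂ) ^ k * (k.factorial : ℂ) := by
          congr 1
          rw [← Finset.prod_range_reflect (fun j => (k : ℂ) - (j : ℂ)) k]
          rw [← prod_range_cast_add_one k]
          refine Finset.prod_congr rfl fun j hj => ?_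
          rw [mem_range] at hj
          have : (k - 1 - j : ℕ) = (k - (j+1) : ℕ) := by omega
          rw [this]
          have hle : j + 1 ≤ k := by omega
          rw [Nat.cast_sub hle]
          push_cast
          ring
  have h2 : ∏ j ∈ Ico (k + 1) (n + 1), ((j : ℂ) - (k : ℂ)) = ((n - k).factorial : ℂ) := by
    rw [Finset.prod_Ico_eq_prod_range]
    have hc : (n + 1 - (k + 1) : ℕ) = n - k := by omega
    rw [hc, ← prod_range_cast_add_one (n - k)]
    refine Finset.prod_congr rfl fun j hj => by push_cast; try ring
  rw [h1, h2]

lemma final_alg (P3 Ep Em We wk Ak pk mk e kf nf : ℂ)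
    (he : e * e = 1)
    (hEp : Ep ≠ 0) (hEm : Em ≠ 0) (hWe : We ≠ 0) (hwk : wk ≠ 0) (hAk : Ak ≠ 0)
    (hpk : pk ≠ 0) (hmk : mk ≠ 0) (hkf : kf ≠ 0) (hnf : nf ≠ 0) :
    P3 / ((-Ak / wk) * (Ep * Em * (e * kf * nf) / We))
      = -(((e / (kf * nf)) * (P3 / ((pk * Ep) * (mk * Em))) * ((pk * mk) / Ak)) * (wk * We)) := by
  have he' : e ≠ 0 := fun h => by simp [h] at he
  field_simp
  linear_combination P3 * he
end Aux

/-- Equation (5.1): the finite symmetric partial fraction expansion for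
closed string amplitudes. -/
theorem closed_finite_symmetric (n : ℕ) (u lam x₁ x₂ x₃ : ℂ)
    (ηp ηm : ℕ → ℂ)
    (hη : ∀ k : ℕ, k ≤ n → ηp k + ηm k = x₁ + x₂ + x₃ + k
      ∧ (-(k : ℂ) - lam) * (ηp k - lam) * (ηm k - lam)
          = (x₁ - lam) * (x₂ - lam) * (x₃ - lam))
    (hx₁ : ∀ k : ℕ, k ≤ n → x₁ + k ≠ 0)
    (hx₂ : ∀ k : ℕ, k ≤ n → x₂ + k ≠ 0)
    (hx₃ : ∀ k : ℕ, k ≤ n → x₃ + k ≠ 0)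
    (hlam : ∀ k : ℕ, k ≤ n → lam + k ≠ 0)
    (hηp : ∀ k : ℕ, k ≤ n → ∀ j : ℕ, j ≤ n → ηp k + j ≠ 0)
    (hηm : ∀ k : ℕ, k ≤ n → ∀ j : ℕ, j ≤ n → ηm k + j ≠ 0) :
    poch (u - x₁) n * poch (u - x₂) n * poch (u - x₃) n
        / (poch x₁ (n + 1) * poch x₂ (n + 1) * poch x₃ (n + 1))
      = ∑ k ∈ Finset.range (n + 1),
          ((-1 : ℂ) ^ k / ((k.factorial : ℂ) * ((n - k).factorial : ℂ)))
          * (poch (u + k) n * poch (u - ηp k) n * poch (u - ηm k) n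
            / (poch (ηp k) (n + 1) * poch (ηm k) (n + 1)))
          * (1 / (x₁ + k) + 1 / (x₂ + k) + 1 / (x₃ + k) - 1 / (lam + k)) := by
  classical
  set A : ℕ → ℂ := fun j => (x₁ + j) * (x₂ + j) * (x₃ + j) with hA_def
  set w : ℕ → ℂ := fun j => lam + j with hw_def
  have hw' : ∀ j : ℕ, j ≤ n → w j ≠ 0 := fun j hj => hlam j hj
  have hA' : ∀ j : ℕ, j ≤ n → A j ≠ 0 := fun j hj =>
    mul_ne_zero (mul_ne_zero (hx₁ j hj) (hx₂ j hj)) (hx₃ j hj)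
  set t : ℕ → ℂ := fun m => if m ≤ n then -(A m) / w m else 0 with ht_def
  have ht_le : ∀ m : ℕ, m ≤ n → t m = -(A m) / w m := fun m hm => if_pos hm
  have ht_top : t (n + 1) = 0 := if_neg (by omega)
  have ht_ne : ∀ m : ℕ, m ≤ n → t m ≠ 0 := by
    intro m hm
    rw [ht_le m hm]
    exact div_ne_zero (neg_ne_zero.mpr (hA' m hm)) (hw' m hm)
  -- key consequences of the cubic relation
  have key1 : ∀ k : ℕ, k ≤ n → ∀ j : ℕ,
      (ηp k + j) * (ηm k + j) * ((k : ℂ) - j) * w k = -(A j) * w k + A k * w j := by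
    intro k hk j
    have h := cubic_all k lam x₁ x₂ x₃ (ηp k) (ηm k) (-(j : ℂ)) (hη k hk).1 (hη k hk).2
    simp only [hA_def, hw_def]
    linear_combination h
  have key2 : ∀ k : ℕ, k ≤ n → ∀ j : ℕ,
      (u + j - ηp k) * (u + j - ηm k) * (u + j + k) * w k
        = (u + j - x₁) * (u + j - x₂) * (u + j - x₃) * w k - A k * (u + j - lam) := by
    intro k hk j
    have h := cubic_all k lam x₁ x₂ x₃ (ηp k) (ηm k) (u + j) (hη k hk).1 (hη k hk).2
    simp only [hA_def, hw_def]
    linear_combination h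
  have key3 : ∀ k : ℕ, k ≤ n →
      (ηp k + k) * (ηm k + k) * w k
        = ((x₂ + k) * (x₃ + k) + (x₁ + k) * (x₃ + k) + (x₁ + k) * (x₂ + k)) * w k - A k := by
    intro k hk
    have h := cubic_deriv k lam x₁ x₂ x₃ (ηp k) (ηm k) (hη k hk).1 (hη k hk).2
    simp only [hA_def, hw_def]
    linear_combination h
  -- injectivity of the nodes
  have key0 : ∀ a b : ℕ, a ≤ n → b ≤ n → a ≠ b → t a = t b → False := by
    intro a b ha hb hne heq
    rw [ht_le a ha, ht_le b hb] at heq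
    have hcross : A a * w b = A b * w a := by
      rw [div_eq_div_iff (hw' a ha) (hw' b hb)] at heq
      linear_combination -heq
    have hzero : (ηp a + b) * (ηm a + b) * ((a : ℂ) - b) * w a = 0 := by
      rw [key1 a ha b]
      linear_combination hcross
    have hab : ((a : ℂ) - b) ≠ 0 := sub_ne_zero.mpr (by exact_mod_cast hne)
    exact (mul_ne_zero (mul_ne_zero (mul_ne_zero (hηp a ha b hb) (hηm a ha b hb)) hab)
      (hw' a ha)) hzero
  have hinj : Set.InjOn t (range (n + 2)) := by
    intro a ha b hb hab
    simp only [coe_range, Set.mem_Iio] at ha hb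
    by_contra hne
    by_cases han : a ≤ n
    · by_cases hbn : b ≤ n
      · exact key0 a b han hbn hne hab
      · have hb1 : b = n + 1 := by omega
        exact ht_ne a han (by rw [hab, hb1, ht_top])
    · have ha1 : a = n + 1 := by omega
      by_cases hbn : b ≤ n
      · exact ht_ne b hbn (by rw [← hab, ha1, ht_top])
      · omega
  -- the interpolating polynomial
  set N : Polynomial ℂ := ∏ j ∈ range n,
      (Polynomial.C (u + j - lam) * Polynomial.X
        + Polynomial.C ((u + j - x₁) * (u + j - x₂) * (u + j - x₃))) with hN_def
  have hNdeg : N.degree < ((n + 2 - 1 : ℕ) : WithBot ℕ) := by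
    have h1 : N.natDegree ≤ n := by
      have h2 : ∀ j ∈ range n, (Polynomial.C (u + j - lam) * Polynomial.X
          + Polynomial.C ((u + j - x₁) * (u + j - x₂) * (u + j - x₃))).natDegree ≤ 1 :=
        fun j _ => Polynomial.natDegree_linear_le
      refine (Polynomial.natDegree_prod_le _ _).trans ((Finset.sum_le_sum h2).trans ?_)
      simp
    calc N.degree ≤ (N.natDegree : WithBot ℕ) := Polynomial.degree_le_natDegree
      _ < ((n + 2 - 1 : ℕ) : WithBot ℕ) := by
          exact_mod_cast Nat.lt_succ_of_le h1
  have hNeval : ∀ z : ℂ, N.eval z = ∏ j ∈ range n,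
      ((u + j - lam) * z + (u + j - x₁) * (u + j - x₂) * (u + j - x₃)) := by
    intro z
    rw [hN_def, Polynomial.eval_prod]
    simp
  have hres := residue_sum (range (n + 2)) t hinj N (by simpa using hNdeg)
  rw [Finset.sum_range_succ] at hres
  set W : ℂ := ∏ j ∈ range (n + 1), w j with hW_def
  have hWne : W ≠ 0 :=
    Finset.prod_ne_zero_iff.mpr fun j hj => hw' j (by have := mem_range.mp hj; omega)
  -- the top node term equals LHS * W
  have htop : Polynomial.eval (t (n + 1)) N / ∏ j ∈ (range (n + 2)).erase (n + 1), (t (n + 1) - t j)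
      = (poch (u - x₁) n * poch (u - x₂) n * poch (u - x₃) n
          / (poch x₁ (n + 1) * poch x₂ (n + 1) * poch x₃ (n + 1))) * W := by
    have he : (range (n + 2)).erase (n + 1) = range (n + 1) := by
      rw [Finset.range_add_one, Finset.erase_insert (by simp)]
    rw [he, ht_top, hNeval]
    have hprod : ∏ j ∈ range (n + 1), ((0 : ℂ) - t j) = (∏ j ∈ range (n + 1), A j) / W := by
      rw [hW_def, ← Finset.prod_div_distrib]
      refine Finset.prod_congr rfl fun j hj => ?_
      have hj' : j ≤ n := by have := mem_range.mp hj; omega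
      rw [ht_le j hj']
      ring
    rw [hprod]
    have hAne : (∏ j ∈ range (n + 1), A j) ≠ 0 :=
      Finset.prod_ne_zero_iff.mpr fun j hj => hA' j (by have := mem_range.mp hj; omega)
    have hpochA : poch x₁ (n + 1) * poch x₂ (n + 1) * poch x₃ (n + 1)
        = ∏ j ∈ range (n + 1), A j := by
      simp only [poch, hA_def, ← Finset.prod_mul_distrib]
    have hpochC : poch (u - x₁) n * poch (u - x₂) n * poch (u - x₃) n
        = ∏ j ∈ range n, ((u + j - x₁) * (u + j - x₂) * (u + j - x₃)) := by
      simp only [poch, ← Finset.prod_mul_distrib]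
      exact Finset.prod_congr rfl fun j _ => by ring
    have hz : ∏ j ∈ range n,
        ((u + (j : ℂ) - lam) * 0 + (u + j - x₁) * (u + j - x₂) * (u + j - x₃))
        = ∏ j ∈ range n, ((u + j - x₁) * (u + j - x₂) * (u + j - x₃)) :=
      Finset.prod_congr rfl fun j _ => by ring
    rw [hz, hpochA, hpochC, div_div_eq_mul_div, div_mul_eq_mul_div]
  -- the k-th node term equals -(RHS_k * W)
  have hterm : ∀ k ∈ range (n + 1),
      Polynomial.eval (t k) N / ∏ j ∈ (range (n + 2)).erase k, (t k - t j)
      = -((((-1 : ℂ) ^ k / ((k.factorial : ℂ) * ((n - k).factorial : ℂ)))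
          * (poch (u + k) n * poch (u - ηp k) n * poch (u - ηm k) n
            / (poch (ηp k) (n + 1) * poch (ηm k) (n + 1)))
          * (1 / (x₁ + k) + 1 / (x₂ + k) + 1 / (x₃ + k) - 1 / (lam + k))) * W) := by
    intro k hk
    have hkn : k ≤ n := by have := mem_range.mp hk; omega
    have hkr : k ∈ range (n + 1) := hk
    have hwk := hw' k hkn
    have hAk := hA' k hkn
    -- numerator
    have hnum : Polynomial.eval (t k) N
        = poch (u + k) n * poch (u - ηp k) n * poch (u - ηm k) n := by
      rw [hNeval, poch, poch, poch, ← Finset.prod_mul_distrib, ← Finset.prod_mul_distrib]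
      refine Finset.prod_congr rfl fun j hj => ?_
      rw [ht_le k hkn]
      have h := key2 k hkn j
      field_simp
      linear_combination -h
    -- the erase set
    have he : (range (n + 2)).erase k = insert (n + 1) ((range (n + 1)).erase k) := by
      have h2 : range (n + 2) = insert (n + 1) (range (n + 1)) := Finset.range_add_one
      rw [h2, Finset.erase_insert_of_ne (by omega : (n + 1) ≠ k)]
    have hnotmem : (n + 1) ∉ (range (n + 1)).erase k := by simp
    rw [he, Finset.prod_insert hnotmem, ht_top, hnum]
    -- the differences
    have hEdiff : ∀ j ∈ (range (n + 1)).erase k,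
        t k - t j = (ηp k + j) * (ηm k + j) * ((j : ℂ) - k) / w j := by
      intro j hj
      obtain ⟨hjk, hjr⟩ := mem_erase.mp hj
      have hjn : j ≤ n := by have := mem_range.mp hjr; omega
      rw [ht_le k hkn, ht_le j hjn]
      have h := key1 k hkn j
      field_simp [hw' j hjn]
      linear_combination h
    rw [Finset.prod_congr rfl hEdiff, Finset.prod_div_distrib,
      Finset.prod_mul_distrib, Finset.prod_mul_distrib, prod_erase_sub n k hkn]
    -- split products
    have hEp : poch (ηp k) (n + 1)
        = (ηp k + k) * ∏ j ∈ (range (n + 1)).erase k, (ηp k + j) :=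
      (Finset.mul_prod_erase _ _ hkr).symm
    have hEm : poch (ηm k) (n + 1)
        = (ηm k + k) * ∏ j ∈ (range (n + 1)).erase k, (ηm k + j) :=
      (Finset.mul_prod_erase _ _ hkr).symm
    have hWsplit : W = w k * ∏ j ∈ (range (n + 1)).erase k, w j :=
      (Finset.mul_prod_erase _ _ hkr).symm
    have hEpne : (∏ j ∈ (range (n + 1)).erase k, (ηp k + j)) ≠ 0 :=
      Finset.prod_ne_zero_iff.mpr fun j hj =>
        hηp k hkn j (by have := mem_range.mp (mem_erase.mp hj).2; omega)
    have hEmne : (∏ j ∈ (range (n + 1)).erase k, (ηm k + j)) ≠ 0 :=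
      Finset.prod_ne_zero_iff.mpr fun j hj =>
        hηm k hkn j (by have := mem_range.mp (mem_erase.mp hj).2; omega)
    have hWene : (∏ j ∈ (range (n + 1)).erase k, w j) ≠ 0 :=
      Finset.prod_ne_zero_iff.mpr fun j hj =>
        hw' j (by have := mem_range.mp (mem_erase.mp hj).2; omega)
    -- the symmetric factor
    have hWk : 1 / (x₁ + (k : ℂ)) + 1 / (x₂ + k) + 1 / (x₃ + k) - 1 / (lam + k)
        = (ηp k + k) * (ηm k + k) / A k := by
      have h := key3 k hkn
      have hl : lam + (k : ℂ) ≠ 0 := hlam k hkn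
      have hx1 := hx₁ k hkn
      have hx2 := hx₂ k hkn
      have hx3 := hx₃ k hkn
      simp only [hA_def, hw_def] at h ⊢
      field_simp
      linear_combination -h
    rw [hWk, ht_le k hkn, hEp, hEm, hWsplit, sub_zero]
    exact final_alg _ _ _ _ _ _ _ _ _ _ _
      (by rw [← pow_add]; exact Even.neg_one_pow ⟨k, rfl⟩)
      hEpne hEmne hWene hwk hAk (hηp k hkn k hkn) (hηm k hkn k hkn)
      (Nat.cast_ne_zero.mpr k.factorial_ne_zero)
      (Nat.cast_ne_zero.mpr (n - k).factorial_ne_zero)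
  rw [Finset.sum_congr rfl hterm, htop, Finset.sum_neg_distrib, ← Finset.sum_mul] at hres
  exact mul_right_cancel₀ hWne (by linear_combination hres)
end
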